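/- Let v : ℝ × ℝ → ℝ be a smooth function of (x,t) with v_xx(x,t) ≠ 0 for all (x,t), satisfying the evolution equation v_t = −v_x²/v_xx. Define η : ℝ × ℝ → ℝ by η = (27/4)·( v_x³ v_xxx / v_xx³ − v_x² / v_xx ). Then η satisfies the linearized equation ∂η/∂t = ( −2 v_x/v_xx )·∂η/∂x + ( v_x²/v_xx² )·∂²η/∂x² at every point (x,t). -/

import Mathlib

/-- Partial derivative with respect to the first (space) variable. -/
noncomputable def pdx (f : ℝ × ℝ → ℝ) : ℝ × ℝ → ℝ :=
  fun p => deriv (fun x => f (x, p.2)) p.1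

/-- Partial derivative with respect to the second (time) variable. -/
noncomputable def pdt (f : ℝ × ℝ → ℝ) : ℝ × ℝ → ℝ :=
  fun p => deriv (fun t => f (p.1, t)) p.2


lemma sliceX_contDiff {f : ℝ × ℝ → ℝ} (hf : ContDiff ℝ (⊤:ℕ∞) f) (t : ℝ) :
    ContDiff ℝ (⊤:ℕ∞) (fun x => f (x, t)) :=
  hf.comp (contDiff_id.prodMk contDiff_const)

lemma sliceT_contDiff {f : ℝ × ℝ → ℝ} (hf : ContDiff ℝ (⊤:ℕ∞) f) (x : ℝ) :
    ContDiff ℝ (⊤:ℕ∞) (fun t => f (x, t)) :=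
  hf.comp (contDiff_const.prodMk contDiff_id)

lemma hasDerivAt_sliceX {f : ℝ × ℝ → ℝ} (hf : ContDiff ℝ (⊤:ℕ∞) f) (p : ℝ × ℝ) :
    HasDerivAt (fun x => f (x, p.2)) (pdx f p) p.1 :=
  (((sliceX_contDiff hf p.2).differentiable (by simp)) p.1).hasDerivAt

lemma hasDerivAt_sliceT {f : ℝ × ℝ → ℝ} (hf : ContDiff ℝ (⊤:ℕ∞) f) (p : ℝ × ℝ) :
    HasDerivAt (fun t => f (p.1, t)) (pdt f p) p.2 :=
  (((sliceT_contDiff hf p.1).differentiable (by simp)) p.2).hasDerivAt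

lemma pdx_eq_fderiv {f : ℝ × ℝ → ℝ} (hf : ContDiff ℝ (⊤:ℕ∞) f) (p : ℝ × ℝ) :
    pdx f p = fderiv ℝ f p ((1:ℝ), (0:ℝ)) := by
  have hc : HasDerivAt (fun x : ℝ => (x, p.2)) ((1:ℝ), (0:ℝ)) p.1 :=
    (hasDerivAt_id p.1).prodMk (hasDerivAt_const p.1 p.2)
  have := ((hf.differentiable (by simp)) p).hasFDerivAt.comp_hasDerivAt p.1
    (by simpa using hc)
  simpa [pdx, Function.comp_def] using this.deriv

lemma pdt_eq_fderiv {f : ℝ × ℝ → ℝ} (hf : ContDiff ℝ (⊤:ℕ∞) f) (p : ℝ × ℝ) :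
    pdt f p = fderiv ℝ f p ((0:ℝ), (1:ℝ)) := by
  have hc : HasDerivAt (fun t : ℝ => (p.1, t)) ((0:ℝ), (1:ℝ)) p.2 :=
    (hasDerivAt_const p.2 p.1).prodMk (hasDerivAt_id p.2)
  have := ((hf.differentiable (by simp)) p).hasFDerivAt.comp_hasDerivAt p.2
    (by simpa using hc)
  simpa [pdt, Function.comp_def] using this.deriv

lemma contDiff_pdx {f : ℝ × ℝ → ℝ} (hf : ContDiff ℝ (⊤:ℕ∞) f) :
    ContDiff ℝ (⊤:ℕ∞) (pdx f) := by
  have : pdx f = fun p => fderiv ℝ f p ((1:ℝ), (0:ℝ)) :=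
    funext fun p => pdx_eq_fderiv hf p
  rw [this]
  exact (hf.fderiv_right (by simp)).clm_apply contDiff_const

lemma contDiff_pdt {f : ℝ × ℝ → ℝ} (hf : ContDiff ℝ (⊤:ℕ∞) f) :
    ContDiff ℝ (⊤:ℕ∞) (pdt f) := by
  have : pdt f = fun p => fderiv ℝ f p ((0:ℝ), (1:ℝ)) :=
    funext fun p => pdt_eq_fderiv hf p
  rw [this]
  exact (hf.fderiv_right (by simp)).clm_apply contDiff_const

lemma fderiv_apply_const {f : ℝ × ℝ → ℝ} (hf : ContDiff ℝ (⊤:ℕ∞) f)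
    (a b : ℝ × ℝ) (p : ℝ × ℝ) :
    fderiv ℝ (fun q => fderiv ℝ f q a) p b = fderiv ℝ (fderiv ℝ f) p b a := by
  have h2 : ContDiff ℝ (⊤:ℕ∞) (fderiv ℝ f) := hf.fderiv_right (by simp)
  have hd : DifferentiableAt ℝ (fderiv ℝ f) p := (h2.differentiable (by simp)) p
  have h := ((ContinuousLinearMap.apply ℝ ℝ a).hasFDerivAt).comp p hd.hasFDerivAt
  rw [show (fun q => fderiv ℝ f q a) = (ContinuousLinearMap.apply ℝ ℝ a) ∘ (fderiv ℝ f) from rfl,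
    h.fderiv]
  simp

lemma pdt_pdx_comm {f : ℝ × ℝ → ℝ} (hf : ContDiff ℝ (⊤:ℕ∞) f) (p : ℝ × ℝ) :
    pdt (pdx f) p = pdx (pdt f) p := by
  have h2 : ContDiff ℝ (⊤:ℕ∞) (fderiv ℝ f) := hf.fderiv_right (by simp)
  have hsymm : ∀ a b, fderiv ℝ (fderiv ℝ f) p a b = fderiv ℝ (fderiv ℝ f) p b a := by
    intro a b
    exact second_derivative_symmetric
      (fun y => ((hf.differentiable (by simp)) y).hasFDerivAt)
      ((h2.differentiable (by simp)) p).hasFDerivAt a b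
  have h1 : pdt (pdx f) p = fderiv ℝ (fderiv ℝ f) p ((0:ℝ),(1:ℝ)) ((1:ℝ),(0:ℝ)) := by
    rw [pdt_eq_fderiv (contDiff_pdx hf) p]
    have : pdx f = fun q => fderiv ℝ f q ((1:ℝ), (0:ℝ)) :=
      funext fun q => pdx_eq_fderiv hf q
    rw [this, fderiv_apply_const hf]
  have h2 : pdx (pdt f) p = fderiv ℝ (fderiv ℝ f) p ((1:ℝ),(0:ℝ)) ((0:ℝ),(1:ℝ)) := by
    rw [pdx_eq_fderiv (contDiff_pdt hf) p]
    have : pdt f = fun q => fderiv ℝ f q ((0:ℝ), (1:ℝ)) :=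
      funext fun q => pdt_eq_fderiv hf q
    rw [this, fderiv_apply_const hf]
  rw [h1, h2, hsymm]

set_option maxHeartbeats 2000000 in
/-- Equation (vt-27) of the concluding remarks: for a solution of `v_t = −v_x²/v_xx`,
the function `η = (27/4)( v_x³ v_xxx / v_xx³ − v_x² / v_xx )` satisfies the linearized
(Lie–Bäcklund symmetry) equation. -/
theorem vt27_third_order_symmetry
    (v : ℝ × ℝ → ℝ) (hv : ContDiff ℝ (⊤ : ℕ∞) v)
    (hvxx : ∀ p : ℝ × ℝ, pdx (pdx v) p ≠ 0)
    (heq : ∀ p : ℝ × ℝ, pdt v p = -(pdx v p) ^ 2 / pdx (pdx v) p)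
    (η : ℝ × ℝ → ℝ)
    (hη : η = fun p =>
      (27 / 4) * ((pdx v p) ^ 3 * pdx (pdx (pdx v)) p / (pdx (pdx v) p) ^ 3
        - (pdx v p) ^ 2 / pdx (pdx v) p)) :
    ∀ p : ℝ × ℝ, pdt η p =
      (-2 * pdx v p / pdx (pdx v) p) * pdx η p
      + ((pdx v p) ^ 2 / (pdx (pdx v) p) ^ 2) * pdx (pdx η) p := by
  subst hη
  have hv1 : ContDiff ℝ (⊤ : ℕ∞) (pdx v) := contDiff_pdx hv
  have hv2 : ContDiff ℝ (⊤ : ℕ∞) (pdx (pdx v)) := contDiff_pdx hv1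
  have hv3 : ContDiff ℝ (⊤ : ℕ∞) (pdx (pdx (pdx v))) := contDiff_pdx hv2
  have hv4 : ContDiff ℝ (⊤ : ℕ∞) (pdx (pdx (pdx (pdx v)))) := contDiff_pdx hv3
  have hA1 : ∀ q : ℝ × ℝ, pdt (pdx v) q = ((-2 : ℝ) * (pdx v q ^ 1 * (pdx (pdx v) q ^ 2)) + (1 : ℝ) * (pdx v q ^ 2 * (pdx (pdx (pdx v)) q ^ 1))) / (pdx (pdx v) q ^ 2) := by
    intro q
    rw [pdt_pdx_comm hv q,
      show pdt v = (fun r => -pdx v r ^ 2 / pdx (pdx v) r) from funext heq]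
    have h1 := hasDerivAt_sliceX hv1 q
    have h2 := hasDerivAt_sliceX hv2 q
    refine (((h1.fun_pow 2).neg.div h2 (hvxx q)).deriv).trans ?_
    simp only [Prod.mk.eta, Pi.mul_apply, Pi.add_apply, Pi.sub_apply, Pi.neg_apply, Pi.div_apply, Pi.pow_apply]
    field_simp [hvxx q]
    ring
  have hA2 : ∀ q : ℝ × ℝ, pdt (pdx (pdx v)) q = ((-2 : ℝ) * (pdx (pdx v) q ^ 4) + (2 : ℝ) * (pdx v q ^ 1 * (pdx (pdx v) q ^ 2 * (pdx (pdx (pdx v)) q ^ 1))) + (-2 : ℝ) * (pdx v q ^ 2 * (pdx (pdx (pdx v)) q ^ 2)) + (1 : ℝ) * (pdx v q ^ 2 * (pdx (pdx v) q ^ 1 * (pdx (pdx (pdx (pdx v))) q ^ 1)))) / (pdx (pdx v) q ^ 3) := by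
    intro q
    rw [pdt_pdx_comm hv1 q,
      show pdt (pdx v) = (fun r => ((-2 : ℝ) * (pdx v r ^ 1 * (pdx (pdx v) r ^ 2)) + (1 : ℝ) * (pdx v r ^ 2 * (pdx (pdx (pdx v)) r ^ 1))) / (pdx (pdx v) r ^ 2)) from funext hA1]
    have h1 := hasDerivAt_sliceX hv1 q
    have h2 := hasDerivAt_sliceX hv2 q
    have h3 := hasDerivAt_sliceX hv3 q
    refine ((((((hasDerivAt_const q.1 (-2 : ℝ)).mul ((h1.fun_pow 1).mul ((h2.fun_pow 2)))).add ((hasDerivAt_const q.1 (1 : ℝ)).mul ((h1.fun_pow 2).mul ((h3.fun_pow 1)))))).div (h2.fun_pow 2) (pow_ne_zero 2 (hvxx q))).deriv).trans ?_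
    simp only [Prod.mk.eta, Pi.mul_apply, Pi.add_apply, Pi.sub_apply, Pi.neg_apply, Pi.div_apply, Pi.pow_apply]
    field_simp [hvxx q]
    ring
  have hA3 : ∀ q : ℝ × ℝ, pdt (pdx (pdx (pdx v))) q = ((-6 : ℝ) * (pdx v q ^ 1 * (pdx (pdx v) q ^ 2 * (pdx (pdx (pdx v)) q ^ 2))) + (4 : ℝ) * (pdx v q ^ 1 * (pdx (pdx v) q ^ 3 * (pdx (pdx (pdx (pdx v))) q ^ 1))) + (6 : ℝ) * (pdx v q ^ 2 * (pdx (pdx (pdx v)) q ^ 3)) + (-6 : ℝ) * (pdx v q ^ 2 * (pdx (pdx v) q ^ 1 * (pdx (pdx (pdx v)) q ^ 1 * (pdx (pdx (pdx (pdx v))) q ^ 1)))) + (1 : ℝ) * (pdx v q ^ 2 * (pdx (pdx v) q ^ 2 * (pdx (pdx (pdx (pdx (pdx v)))) q ^ 1)))) / (pdx (pdx v) q ^ 4) := by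
    intro q
    rw [pdt_pdx_comm hv2 q,
      show pdt (pdx (pdx v)) = (fun r => ((-2 : ℝ) * (pdx (pdx v) r ^ 4) + (2 : ℝ) * (pdx v r ^ 1 * (pdx (pdx v) r ^ 2 * (pdx (pdx (pdx v)) r ^ 1))) + (-2 : ℝ) * (pdx v r ^ 2 * (pdx (pdx (pdx v)) r ^ 2)) + (1 : ℝ) * (pdx v r ^ 2 * (pdx (pdx v) r ^ 1 * (pdx (pdx (pdx (pdx v))) r ^ 1)))) / (pdx (pdx v) r ^ 3)) from funext hA2]
    have h1 := hasDerivAt_sliceX hv1 q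
    have h2 := hasDerivAt_sliceX hv2 q
    have h3 := hasDerivAt_sliceX hv3 q
    have h4 := hasDerivAt_sliceX hv4 q
    refine ((((((((hasDerivAt_const q.1 (-2 : ℝ)).mul ((h2.fun_pow 4))).add ((hasDerivAt_const q.1 (2 : ℝ)).mul ((h1.fun_pow 1).mul ((h2.fun_pow 2).mul ((h3.fun_pow 1)))))).add ((hasDerivAt_const q.1 (-2 : ℝ)).mul ((h1.fun_pow 2).mul ((h3.fun_pow 2))))).add ((hasDerivAt_const q.1 (1 : ℝ)).mul ((h1.fun_pow 2).mul ((h2.fun_pow 1).mul ((h4.fun_pow 1))))))).div (h2.fun_pow 3) (pow_ne_zero 3 (hvxx q))).deriv).trans ?_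
    simp only [Prod.mk.eta, Pi.mul_apply, Pi.add_apply, Pi.sub_apply, Pi.neg_apply, Pi.div_apply, Pi.pow_apply]
    field_simp [hvxx q]
    ring
  have hE2 : ∀ q : ℝ × ℝ, pdx (fun p =>
      (27 / 4) * ((pdx v p) ^ 3 * pdx (pdx (pdx v)) p / (pdx (pdx v) p) ^ 3
        - (pdx v p) ^ 2 / pdx (pdx v) p)) q = (((-27 : ℝ)/2) * (pdx v q ^ 1 * (pdx (pdx v) q ^ 4)) + (27 : ℝ) * (pdx v q ^ 2 * (pdx (pdx v) q ^ 2 * (pdx (pdx (pdx v)) q ^ 1))) + ((-81 : ℝ)/4) * (pdx v q ^ 3 * (pdx (pdx (pdx v)) q ^ 2)) + ((27 : ℝ)/4) * (pdx v q ^ 3 * (pdx (pdx v) q ^ 1 * (pdx (pdx (pdx (pdx v))) q ^ 1)))) / (pdx (pdx v) q ^ 4) := by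
    intro q
    have h1 := hasDerivAt_sliceX hv1 q
    have h2 := hasDerivAt_sliceX hv2 q
    have h3 := hasDerivAt_sliceX hv3 q
    refine (((hasDerivAt_const q.1 ((27 : ℝ) / 4)).mul
      ((((h1.fun_pow 3).mul h3).div (h2.fun_pow 3) (pow_ne_zero 3 (hvxx q))).sub
        ((h1.fun_pow 2).div h2 (hvxx q)))).deriv).trans ?_
    simp only [Prod.mk.eta, Pi.mul_apply, Pi.add_apply, Pi.sub_apply, Pi.neg_apply, Pi.div_apply, Pi.pow_apply]
    field_simp [hvxx q]
    ring
  have hE3 : ∀ q : ℝ × ℝ, pdx (pdx (fun p =>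
      (27 / 4) * ((pdx v p) ^ 3 * pdx (pdx (pdx v)) p / (pdx (pdx v) p) ^ 3
        - (pdx v p) ^ 2 / pdx (pdx v) p))) q = (((-27 : ℝ)/2) * (pdx (pdx v) q ^ 6) + (54 : ℝ) * (pdx v q ^ 1 * (pdx (pdx v) q ^ 4 * (pdx (pdx (pdx v)) q ^ 1))) + ((-459 : ℝ)/4) * (pdx v q ^ 2 * (pdx (pdx v) q ^ 2 * (pdx (pdx (pdx v)) q ^ 2))) + ((189 : ℝ)/4) * (pdx v q ^ 2 * (pdx (pdx v) q ^ 3 * (pdx (pdx (pdx (pdx v))) q ^ 1))) + (81 : ℝ) * (pdx v q ^ 3 * (pdx (pdx (pdx v)) q ^ 3)) + ((-243 : ℝ)/4) * (pdx v q ^ 3 * (pdx (pdx v) q ^ 1 * (pdx (pdx (pdx v)) q ^ 1 * (pdx (pdx (pdx (pdx v))) q ^ 1)))) + ((27 : ℝ)/4) * (pdx v q ^ 3 * (pdx (pdx v) q ^ 2 * (pdx (pdx (pdx (pdx (pdx v)))) q ^ 1)))) / (pdx (pdx v) q ^ 5) := by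
    intro q
    rw [show pdx (fun p =>
      (27 / 4) * ((pdx v p) ^ 3 * pdx (pdx (pdx v)) p / (pdx (pdx v) p) ^ 3
        - (pdx v p) ^ 2 / pdx (pdx v) p)) = (fun r => (((-27 : ℝ)/2) * (pdx v r ^ 1 * (pdx (pdx v) r ^ 4)) + (27 : ℝ) * (pdx v r ^ 2 * (pdx (pdx v) r ^ 2 * (pdx (pdx (pdx v)) r ^ 1))) + ((-81 : ℝ)/4) * (pdx v r ^ 3 * (pdx (pdx (pdx v)) r ^ 2)) + ((27 : ℝ)/4) * (pdx v r ^ 3 * (pdx (pdx v) r ^ 1 * (pdx (pdx (pdx (pdx v))) r ^ 1)))) / (pdx (pdx v) r ^ 4)) from funext hE2]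
    have h1 := hasDerivAt_sliceX hv1 q
    have h2 := hasDerivAt_sliceX hv2 q
    have h3 := hasDerivAt_sliceX hv3 q
    have h4 := hasDerivAt_sliceX hv4 q
    refine ((((((((hasDerivAt_const q.1 ((-27 : ℝ)/2)).mul ((h1.fun_pow 1).mul ((h2.fun_pow 4)))).add ((hasDerivAt_const q.1 (27 : ℝ)).mul ((h1.fun_pow 2).mul ((h2.fun_pow 2).mul ((h3.fun_pow 1)))))).add ((hasDerivAt_const q.1 ((-81 : ℝ)/4)).mul ((h1.fun_pow 3).mul ((h3.fun_pow 2))))).add ((hasDerivAt_const q.1 ((27 : ℝ)/4)).mul ((h1.fun_pow 3).mul ((h2.fun_pow 1).mul ((h4.fun_pow 1))))))).div (h2.fun_pow 4) (pow_ne_zero 4 (hvxx q))).deriv).trans ?_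
    simp only [Prod.mk.eta, Pi.mul_apply, Pi.add_apply, Pi.sub_apply, Pi.neg_apply, Pi.div_apply, Pi.pow_apply]
    field_simp [hvxx q]
    ring
  have hT : ∀ q : ℝ × ℝ, pdt (fun p =>
      (27 / 4) * ((pdx v p) ^ 3 * pdx (pdx (pdx v)) p / (pdx (pdx v) p) ^ 3
        - (pdx v p) ^ 2 / pdx (pdx v) p)) q = (((27 : ℝ)/2) * (pdx v q ^ 2 * (pdx (pdx v) q ^ 6)) + ((-297 : ℝ)/4) * (pdx v q ^ 4 * (pdx (pdx v) q ^ 2 * (pdx (pdx (pdx v)) q ^ 2))) + ((135 : ℝ)/4) * (pdx v q ^ 4 * (pdx (pdx v) q ^ 3 * (pdx (pdx (pdx (pdx v))) q ^ 1))) + (81 : ℝ) * (pdx v q ^ 5 * (pdx (pdx (pdx v)) q ^ 3)) + ((-243 : ℝ)/4) * (pdx v q ^ 5 * (pdx (pdx v) q ^ 1 * (pdx (pdx (pdx v)) q ^ 1 * (pdx (pdx (pdx (pdx v))) q ^ 1)))) + ((27 : ℝ)/4) * (pdx v q ^ 5 * (pdx (pdx v) q ^ 2 * (pdx (pdx (pdx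 (pdx (pdx v)))) q ^ 1)))) / (pdx (pdx v) q ^ 7) := by
    intro q
    have k1 := hasDerivAt_sliceT hv1 q
    have k2 := hasDerivAt_sliceT hv2 q
    have k3 := hasDerivAt_sliceT hv3 q
    refine (((hasDerivAt_const q.2 ((27 : ℝ) / 4)).mul
      ((((k1.fun_pow 3).mul k3).div (k2.fun_pow 3) (pow_ne_zero 3 (hvxx q))).sub
        ((k1.fun_pow 2).div k2 (hvxx q)))).deriv).trans ?_
    simp only [Prod.mk.eta, Pi.mul_apply, Pi.add_apply, Pi.sub_apply, Pi.neg_apply, Pi.div_apply, Pi.pow_apply, hA1 q, hA2 q, hA3 q]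
    have hw : pdx (pdx v) q * (pdx (pdx v) q)⁻¹ = 1 := mul_inv_cancel₀ (hvxx q)
    linear_combination ((-27 : ℝ) * pdx v q ^ 2 * pdx (pdx v) q ^ 3 * (pdx (pdx v) q)⁻¹ ^ 4 + ((-27 : ℝ)/2) * pdx v q ^ 2 * pdx (pdx v) q ^ 4 * (pdx (pdx v) q)⁻¹ ^ 5 + ((-27 : ℝ)/2) * pdx v q ^ 2 * pdx (pdx v) q ^ 5 * (pdx (pdx v) q)⁻¹ ^ 6 + ((27 : ℝ)/2) * pdx v q ^ 3 * pdx (pdx v) q ^ 1 * pdx (pdx (pdx v)) q ^ 1 * (pdx (pdx v) q)⁻¹ ^ 4 + ((81 : ℝ)/2) * pdx v q ^ 3 * pdx (pdx v) q ^ 5 * pdx (pdx (pdx v)) q ^ 1 * (pdx (pdx v) q)⁻¹ ^ 8 + ((27 : ℝ)/2) * pdx v q ^ 4 * pdx (pdx (pdx v)) q ^ 2 * (pdx (pdx v) q)⁻¹ ^ 5 + ((-27 : ℝ)/4) * pdx v q ^ 4 * pdx (pdx v) q ^ 1 * pdx (pdx (pdx (pdx v))) q ^ 1 * (pdx (pdx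 v) q)⁻¹ ^ 5 + ((27 : ℝ)/2) * pdx v q ^ 4 * pdx (pdx v) q ^ 1 * pdx (pdx (pdx v)) q ^ 2 * (pdx (pdx v) q)⁻¹ ^ 6 + ((-27 : ℝ)/4) * pdx v q ^ 4 * pdx (pdx v) q ^ 2 * pdx (pdx (pdx (pdx v))) q ^ 1 * (pdx (pdx v) q)⁻¹ ^ 6 + ((-243 : ℝ)/4) * pdx v q ^ 4 * pdx (pdx v) q ^ 2 * pdx (pdx (pdx v)) q ^ 2 * (pdx (pdx v) q)⁻¹ ^ 7 + (27 : ℝ) * pdx v q ^ 4 * pdx (pdx v) q ^ 3 * pdx (pdx (pdx (pdx v))) q ^ 1 * (pdx (pdx v) q)⁻¹ ^ 7 + (-81 : ℝ) * pdx v q ^ 4 * pdx (pdx v) q ^ 3 * pdx (pdx (pdx v)) q ^ 2 * (pdx (pdx v) q)⁻¹ ^ 8 + (27 : ℝ) * pdx v q ^ 4 * pdx (pdx v) q ^ 4 * pdx (pdx (pdx (pdx v))) q ^ 1 * (pdx (pdx v) q)⁻¹ ^ 8 + ((-81 : ℝ)/2) * pdx v q ^ 4 * pdx (pdx v) q ^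 4 * pdx (pdx (pdx v)) q ^ 2 * (pdx (pdx v) q)⁻¹ ^ 9 + (27 : ℝ) * pdx v q ^ 4 * pdx (pdx v) q ^ 5 * pdx (pdx (pdx (pdx v))) q ^ 1 * (pdx (pdx v) q)⁻¹ ^ 9 + (81 : ℝ) * pdx v q ^ 5 * pdx (pdx (pdx v)) q ^ 3 * (pdx (pdx v) q)⁻¹ ^ 7 + ((-243 : ℝ)/4) * pdx v q ^ 5 * pdx (pdx v) q ^ 1 * pdx (pdx (pdx v)) q ^ 1 * pdx (pdx (pdx (pdx v))) q ^ 1 * (pdx (pdx v) q)⁻¹ ^ 7 + (81 : ℝ) * pdx v q ^ 5 * pdx (pdx v) q ^ 1 * pdx (pdx (pdx v)) q ^ 3 * (pdx (pdx v) q)⁻¹ ^ 8 + ((27 : ℝ)/4) * pdx v q ^ 5 * pdx (pdx v) q ^ 2 * pdx (pdx (pdx (pdx (pdx v)))) q ^ 1 * (pdx (pdx v) q)⁻¹ ^ 7 + ((-243 : ℝ)/4) * pdx v q ^ 5 * pdx (pdx v) q ^ 2 * pdx (pdx (pdx v)) q ^ 1 * pdx (pdx (pdx (pdx v))) q ^ 1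 * (pdx (pdx v) q)⁻¹ ^ 8 + ((81 : ℝ)/2) * pdx v q ^ 5 * pdx (pdx v) q ^ 2 * pdx (pdx (pdx v)) q ^ 3 * (pdx (pdx v) q)⁻¹ ^ 9 + ((27 : ℝ)/4) * pdx v q ^ 5 * pdx (pdx v) q ^ 3 * pdx (pdx (pdx (pdx (pdx v)))) q ^ 1 * (pdx (pdx v) q)⁻¹ ^ 8 + ((-81 : ℝ)/2) * pdx v q ^ 5 * pdx (pdx v) q ^ 3 * pdx (pdx (pdx v)) q ^ 1 * pdx (pdx (pdx (pdx v))) q ^ 1 * (pdx (pdx v) q)⁻¹ ^ 9 + ((27 : ℝ)/4) * pdx v q ^ 5 * pdx (pdx v) q ^ 4 * pdx (pdx (pdx (pdx (pdx v)))) q ^ 1 * (pdx (pdx v) q)⁻¹ ^ 9) * hw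
  intro p
  rw [hT p, hE3 p, hE2 p]
  field_simp [hvxx p]
  ring
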